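/- Let (Ω, ℙ) be a probability space, E a measurable space, X : Ω → AddCircle (1 : ℝ), Y : Ω → E, and Z : Ω → AddCircle (1 : ℝ) measurable random variables. Assume the law of Z is the Haar probability measure on AddCircle (1 : ℝ) and Z is independent of the pair ω ↦ (X ω, Y ω). Then X + Z is independent of the pair ω ↦ (X ω, Y ω), and the law of X + Z is the Haar probability measure. -/
import Mathlib

open MeasureTheory ProbabilityTheory

/-- Strengthened one-time pad on the torus: if `Z` is uniformly (Haar) distributed on
the torus `AddCircle (1 : ℝ)` and independent of the pair `(X, Y)` (where `Y` is any
side information), then the ciphertext `X + Z` is independent of the pair `(X, Y)`,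
and `X + Z` is uniformly (Haar) distributed. -/
theorem torus_otp_pair {Ω E : Type*} [MeasureSpace Ω]
    [IsProbabilityMeasure (ℙ : Measure Ω)] [MeasurableSpace E]
    (X : Ω → AddCircle (1 : ℝ)) (Y : Ω → E) (Z : Ω → AddCircle (1 : ℝ))
    (hX : Measurable X) (hY : Measurable Y) (hZ : Measurable Z)
    (hZ_unif : (ℙ : Measure Ω).map Z = (volume : Measure (AddCircle (1 : ℝ))))
    (hZ_indep : IndepFun Z (fun ω => (X ω, Y ω)) ℙ) :
    IndepFun (X + Z) (fun ω => (X ω, Y ω)) ℙ ∧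
      (ℙ : Measure Ω).map (X + Z) = (volume : Measure (AddCircle (1 : ℝ))) := by
  set W : Ω → AddCircle (1 : ℝ) × E := fun ω => (X ω, Y ω) with hWdef
  have hW : Measurable W := hX.prodMk hY
  -- joint law of (W, Z)
  have h1 : (ℙ : Measure Ω).map (fun ω => (W ω, Z ω))
      = ((ℙ : Measure Ω).map W).prod ((ℙ : Measure Ω).map Z) :=
    (indepFun_iff_map_prod_eq_prod_map_map hW.aemeasurable hZ.aemeasurable).mp hZ_indep.symm
  rw [hZ_unif] at h1
  have hμW : IsProbabilityMeasure ((ℙ : Measure Ω).map W) := Measure.isProbabilityMeasure_map hW.aemeasurable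
  -- the skew product (w, z) ↦ (w, w.1 + z) preserves μW.prod volume
  have hskew : MeasurePreserving
      (fun p : (AddCircle (1 : ℝ) × E) × AddCircle (1 : ℝ) => (p.1, p.1.1 + p.2))
      (((ℙ : Measure Ω).map W).prod volume) (((ℙ : Measure Ω).map W).prod volume) := by
    refine (MeasurePreserving.id ((ℙ : Measure Ω).map W)).skew_product
      (g := fun w z => w.1 + z) ((measurable_fst.fst).add measurable_snd) ?_
    exact Filter.Eventually.of_forall fun w => map_add_left_eq_self volume w.1
  -- law of (W, X + Z)
  have h2 : (ℙ : Measure Ω).map (fun ω => (W ω, (X + Z) ω))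
      = ((ℙ : Measure Ω).map W).prod volume := by
    calc (ℙ : Measure Ω).map (fun ω => (W ω, (X + Z) ω))
        = ((ℙ : Measure Ω).map (fun ω => (W ω, Z ω))).map
            (fun p : (AddCircle (1 : ℝ) × E) × AddCircle (1 : ℝ) => (p.1, p.1.1 + p.2)) := by
          rw [Measure.map_map hskew.measurable (hW.prodMk hZ)]
          rfl
      _ = ((ℙ : Measure Ω).map W).prod volume := by
          rw [h1]; exact hskew.map_eq
  have hXZ : Measurable (X + Z) := hX.add hZ
  -- law of X + Z is volume
  have h3 : (ℙ : Measure Ω).map (X + Z) = (volume : Measure (AddCircle (1 : ℝ))) := by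
    have : ((ℙ : Measure Ω).map (fun ω => (W ω, (X + Z) ω))).map Prod.snd
        = (ℙ : Measure Ω).map (X + Z) := by
      rw [Measure.map_map measurable_snd (hW.prodMk hXZ)]; rfl
    rw [h2] at this
    rw [← this, Measure.map_snd_prod, measure_univ, one_smul]
  refine ⟨?_, h3⟩
  have : IndepFun W (X + Z) ℙ := by
    rw [indepFun_iff_map_prod_eq_prod_map_map hW.aemeasurable hXZ.aemeasurable, h2, h3]
  exact this.symm
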